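/- Existence of quasi-couplings: for any system of binary random variables given by context-wise joint distributions and content-wise multimaximal coupling distributions (over a finite index set of (context,content) pairs), there exists a signed measure (real-valued function summing to 1) on the set of all joint value assignments whose context-marginals match the given context distributions and whose content-marginals match the given multimaximal coupling distributions. -/

import Mathlib

open Finset

section QCAux

variable {α : Type} [Fintype α] [DecidableEq α]

private lemma qc_sum_prod_bool_one (ν : α → Bool → ℝ)
    (hν : ∀ a, ν a true + ν a false = 1) :
    (∑ u : α → Bool, ∏ a, ν a (u a)) = 1 := by
  classical
  have h := Finset.prod_univ_sum (fun _ : α => (Finset.univ : Finset Bool)) (fun a b => ν a b)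
  rw [Fintype.piFinset_univ] at h
  rw [← h]
  have hb : ∀ a : α, (∑ b ∈ (Finset.univ : Finset Bool), ν a b) = 1 := by
    intro a; rw [Fintype.sum_bool]; exact hν a
  rw [Finset.prod_congr rfl (fun a _ => hb a), Finset.prod_const_one]

private lemma qc_marg (ν : α → Bool → ℝ) (hν : ∀ a, ν a true + ν a false = 1)
    (r : α → Prop) [DecidablePred r] (v : {x // r x} → Bool) :
    (∑ u ∈ Finset.univ.filter (fun u : α → Bool => ∀ x : {x // r x}, u x.1 = v x),
      ∏ a, ν a (u a)) = ∏ x : {x // r x}, ν x.1 (v x) := by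
  classical
  rw [Finset.sum_filter]
  rw [← (Equiv.piEquivPiSubtypeProd r (fun _ => Bool)).symm.sum_comp
        (fun u : α → Bool => if (∀ x : {x // r x}, u x.1 = v x) then ∏ a, ν a (u a) else 0)]
  rw [Fintype.sum_prod_type]
  have key : ∀ (y : {x // r x} → Bool) (w : {x // ¬ r x} → Bool),
      ((fun u : α → Bool => if (∀ x : {x // r x}, u x.1 = v x) then ∏ a, ν a (u a) else 0)
        ((Equiv.piEquivPiSubtypeProd r (fun _ => Bool)).symm (y, w)))
      = if y = v then (∏ x : {x // r x}, ν x.1 (y x)) * ∏ x : {x // ¬ r x}, ν x.1 (w x)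
        else 0 := by
    intro y w
    have happ : ∀ a : α, (Equiv.piEquivPiSubtypeProd r (fun _ => Bool)).symm (y, w) a
        = if h : r a then y ⟨a, h⟩ else w ⟨a, h⟩ :=
      fun a => Equiv.piEquivPiSubtypeProd_symm_apply r (fun _ => Bool) (y, w) a
    have hcond : (∀ x : {x // r x},
        (Equiv.piEquivPiSubtypeProd r (fun _ => Bool)).symm (y, w) x.1 = v x) ↔ y = v := by
      constructor
      · intro h; funext x; have := h x; rwa [happ, dif_pos x.2, Subtype.coe_eta] at this
      · rintro rfl x; rw [happ, dif_pos x.2, Subtype.coe_eta]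
    simp only [hcond]
    by_cases hy : y = v
    · rw [if_pos hy, if_pos hy]
      rw [← Fintype.prod_subtype_mul_prod_subtype r
        (fun a => ν a ((Equiv.piEquivPiSubtypeProd r (fun _ => Bool)).symm (y, w) a))]
      congr 1
      · exact Fintype.prod_congr _ _ (fun x => by rw [happ, dif_pos x.2, Subtype.coe_eta])
      · exact Fintype.prod_congr _ _ (fun x => by rw [happ, dif_neg x.2, Subtype.coe_eta])
    · rw [if_neg hy, if_neg hy]
  simp only [key]
  have step : ∀ y : {x // r x} → Bool,
      (∑ w : {x // ¬ r x} → Bool,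
        if y = v then (∏ x : {x // r x}, ν x.1 (y x)) * ∏ x : {x // ¬ r x}, ν x.1 (w x) else 0)
      = if y = v then (∏ x : {x // r x}, ν x.1 (y x)) else 0 := by
    intro y
    by_cases hy : y = v
    · simp only [if_pos hy, ← Finset.mul_sum]
      rw [qc_sum_prod_bool_one (fun (x : {x // ¬ r x}) b => ν x.1 b) (fun x => hν x.1), mul_one]
    · simp only [if_neg hy, Finset.sum_const_zero]
  simp only [step]
  rw [Finset.sum_ite_eq' Finset.univ v (fun y => ∏ x : {x // r x}, ν x.1 (y x)),
    if_pos (Finset.mem_univ v)]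

private lemma qc_key (ν : α → Bool → ℝ) (hν : ∀ a, ν a true + ν a false = 1)
    (p p' : α → Prop) [DecidablePred p] [DecidablePred p']
    (G : ({x // p x} → Bool) → ℝ) (v : {x // p' x} → Bool) :
    (∑ f ∈ Finset.univ.filter (fun f : α → Bool => ∀ x : {x // p' x}, f x.1 = v x),
      G (fun x => f x.1) * ∏ x : {x // ¬ p x}, ν x.1 (f x.1))
    = (∑ u ∈ Finset.univ.filter
        (fun u : {x // p x} → Bool =>
          ∀ x : {y // p y ∧ p' y}, u ⟨x.1, x.2.1⟩ = v ⟨x.1, x.2.2⟩), G u)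
      * ∏ x : {y // p' y ∧ ¬ p y}, ν x.1 (v ⟨x.1, x.2.1⟩) := by
  classical
  set e := Equiv.piEquivPiSubtypeProd p (fun _ => Bool) with he
  rw [Finset.sum_filter]
  rw [← e.symm.sum_comp (fun f : α → Bool =>
    if (∀ x : {x // p' x}, f x.1 = v x) then
      G (fun x => f x.1) * ∏ x : {x // ¬ p x}, ν x.1 (f x.1) else 0)]
  rw [Fintype.sum_prod_type]
  have happ : ∀ (u : {x // p x} → Bool) (w : {x // ¬ p x} → Bool) (a : α),
      e.symm (u, w) a = if h : p a then u ⟨a, h⟩ else w ⟨a, h⟩ :=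
    fun u w a => Equiv.piEquivPiSubtypeProd_symm_apply p (fun _ => Bool) (u, w) a
  have key : ∀ (u : {x // p x} → Bool) (w : {x // ¬ p x} → Bool),
      ((fun f : α → Bool =>
        if (∀ x : {x // p' x}, f x.1 = v x) then
          G (fun x => f x.1) * ∏ x : {x // ¬ p x}, ν x.1 (f x.1) else 0) (e.symm (u, w)))
      = if (∀ x : {y // p y ∧ p' y}, u ⟨x.1, x.2.1⟩ = v ⟨x.1, x.2.2⟩) then
          G u * (if (∀ x : {y // p' y ∧ ¬ p y}, w ⟨x.1, x.2.2⟩ = v ⟨x.1, x.2.1⟩) then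
            ∏ x : {x // ¬ p x}, ν x.1 (w x) else 0) else 0 := by
    intro u w
    have hcond : (∀ x : {x // p' x}, e.symm (u, w) x.1 = v x)
        ↔ ((∀ x : {y // p y ∧ p' y}, u ⟨x.1, x.2.1⟩ = v ⟨x.1, x.2.2⟩)
          ∧ (∀ x : {y // p' y ∧ ¬ p y}, w ⟨x.1, x.2.2⟩ = v ⟨x.1, x.2.1⟩)) := by
      constructor
      · intro h
        refine ⟨fun x => ?_, fun x => ?_⟩
        · have := h ⟨x.1, x.2.2⟩; rwa [happ, dif_pos x.2.1] at this
        · have := h ⟨x.1, x.2.1⟩; rwa [happ, dif_neg x.2.2] at this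
      · rintro ⟨h1, h2⟩ x
        by_cases hp : p x.1
        · rw [happ, dif_pos hp]
          have := h1 ⟨x.1, hp, x.2⟩; simpa using this
        · rw [happ, dif_neg hp]
          have := h2 ⟨x.1, x.2, hp⟩; simpa using this
    show (if (∀ x : {x // p' x}, e.symm (u, w) x.1 = v x) then
        G (fun x => e.symm (u, w) x.1) * ∏ x : {x // ¬ p x}, ν x.1 (e.symm (u, w) x.1)
      else 0) = _
    have hG : (fun x : {x // p x} => e.symm (u, w) x.1) = u :=
      funext fun x => by rw [happ, dif_pos x.2, Subtype.coe_eta]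
    have hW : ∀ x : {x // ¬ p x}, e.symm (u, w) x.1 = w x :=
      fun x => by rw [happ, dif_neg x.2, Subtype.coe_eta]
    by_cases hcs : (∀ x : {x // p' x}, e.symm (u, w) x.1 = v x)
    · rw [if_pos hcs, if_pos (hcond.mp hcs).1, if_pos (hcond.mp hcs).2, hG]
      congr 1
      exact Fintype.prod_congr _ _ (fun x => by rw [hW])
    · rw [if_neg hcs]
      have hnot : ¬((∀ x : {y // p y ∧ p' y}, u ⟨x.1, x.2.1⟩ = v ⟨x.1, x.2.2⟩)
          ∧ (∀ x : {y // p' y ∧ ¬ p y}, w ⟨x.1, x.2.2⟩ = v ⟨x.1, x.2.1⟩)) :=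
        fun h => hcs (hcond.mpr h)
      by_cases hA : (∀ x : {y // p y ∧ p' y}, u ⟨x.1, x.2.1⟩ = v ⟨x.1, x.2.2⟩)
      · rw [if_pos hA, if_neg (fun hB => hnot ⟨hA, hB⟩), mul_zero]
      · rw [if_neg hA]
  simp only [key]
  have inner : (∑ w : {x // ¬ p x} → Bool,
      if (∀ x : {y // p' y ∧ ¬ p y}, w ⟨x.1, x.2.2⟩ = v ⟨x.1, x.2.1⟩) then
        ∏ x : {x // ¬ p x}, ν x.1 (w x) else 0)
      = ∏ x : {y // p' y ∧ ¬ p y}, ν x.1 (v ⟨x.1, x.2.1⟩) := by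
    have hiff : ∀ w : {x // ¬ p x} → Bool,
        (∀ x : {y // p' y ∧ ¬ p y}, w ⟨x.1, x.2.2⟩ = v ⟨x.1, x.2.1⟩)
        ↔ (∀ x : {x : {x // ¬ p x} // p' x.1}, w x.1 = v ⟨x.1.1, x.2⟩) := by
      intro w
      constructor
      · intro h x
        have := h ⟨x.1.1, x.2, x.1.2⟩
        simpa [Subtype.coe_eta] using this
      · intro h x
        exact h ⟨⟨x.1, x.2.2⟩, x.2.1⟩
    have hm := qc_marg (fun (x : {x // ¬ p x}) b => ν x.1 b) (fun x => hν x.1)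
      (fun x => p' x.1) (fun x => v ⟨x.1.1, x.2⟩)
    rw [Finset.sum_filter] at hm
    calc (∑ w : {x // ¬ p x} → Bool,
        if (∀ x : {y // p' y ∧ ¬ p y}, w ⟨x.1, x.2.2⟩ = v ⟨x.1, x.2.1⟩) then
          ∏ x : {x // ¬ p x}, ν x.1 (w x) else 0)
        = ∑ w : {x // ¬ p x} → Bool,
          if (∀ x : {x : {x // ¬ p x} // p' x.1}, w x.1 = v ⟨x.1.1, x.2⟩) then
            ∏ x : {x // ¬ p x}, ν x.1 (w x) else 0 :=
          Finset.sum_congr rfl (fun w _ => if_congr (hiff w) rfl rfl)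
      _ = ∏ x : {x : {x // ¬ p x} // p' x.1}, ν x.1.1 (v ⟨x.1.1, x.2⟩) := hm
      _ = ∏ x : {y // p' y ∧ ¬ p y}, ν x.1 (v ⟨x.1, x.2.1⟩) := by
          refine Fintype.prod_equiv
            ⟨fun x => ⟨x.1.1, x.2, x.1.2⟩, fun y => ⟨⟨y.1, y.2.2⟩, y.2.1⟩,
              by rintro ⟨⟨a, h1⟩, h2⟩; rfl, by rintro ⟨a, h1, h2⟩; rfl⟩ _ _ (fun x => rfl)
  rw [Finset.sum_filter, Finset.sum_mul]
  refine Finset.sum_congr rfl (fun u _ => ?_)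
  by_cases hC : (∀ x : {y // p y ∧ p' y}, u ⟨x.1, x.2.1⟩ = v ⟨x.1, x.2.2⟩)
  · simp only [if_pos hC, ← Finset.mul_sum, inner]
  · simp only [if_neg hC, Finset.sum_const_zero, zero_mul]

private lemma qc_point (ν : α → Bool → ℝ) (hν : ∀ a, ν a true + ν a false = 1)
    (a0 : α) (b : Bool) :
    (∑ u ∈ Finset.univ.filter (fun u : α → Bool => u a0 = b), ∏ a, ν a (u a)) = ν a0 b := by
  classical
  have h := qc_marg ν hν (fun x => x = a0) (fun _ => b)
  haveI : Subsingleton {x // x = a0} :=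
    ⟨by rintro ⟨x, rfl⟩ ⟨y, hy⟩; exact Subtype.ext hy.symm⟩
  refine Eq.trans (Finset.sum_congr ?_ (fun _ _ => rfl))
    (h.trans (by convert Fintype.prod_subsingleton (ι := {x // x = a0}) (M := ℝ) (fun x => ν x.1 b) ⟨a0, rfl⟩))
  ext u
  simp only [Finset.mem_filter, Finset.mem_univ, true_and]
  constructor
  · rintro hh ⟨x, rfl⟩; exact hh
  · intro hh; exact hh ⟨a0, rfl⟩

private lemma qc_sub_zero (ν : α → Bool → ℝ) (hν : ∀ a, ν a true + ν a false = 1)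
    (X : (α → Bool) → ℝ) (hX : (∑ u, X u) = 1) :
    (∑ u : α → Bool, (X u - ∏ x, ν x (u x))) = 0 := by
  rw [Finset.sum_sub_distrib, hX, qc_sum_prod_bool_one ν hν, sub_self]

private lemma qc_sub_point (ν : α → Bool → ℝ) (hν : ∀ a, ν a true + ν a false = 1)
    (X : (α → Bool) → ℝ) (a0 : α) (b : Bool)
    (hX : (∑ u ∈ Finset.univ.filter (fun u : α → Bool => u a0 = b), X u) = ν a0 b) :
    (∑ u ∈ Finset.univ.filter (fun u : α → Bool => u a0 = b),
      (X u - ∏ x, ν x (u x))) = 0 := by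
  rw [Finset.sum_sub_distrib, hX, qc_point ν hν a0 b, sub_self]

end QCAux

/-- existence of quasi-couplings. For a system of binary
variables indexed by (context, content) pairs (ι with injective pairing
(ctx, cnt)), given probability distributions D c for each context and E q for
each content (e.g., the multimaximal coupling distributions of the
connections) that agree on the single-variable marginals Pr[R_a = 1], there is
a real-valued function Qm on all joint value assignments summing to 1 (a
signed quasi-distribution) whose context-marginals are the D c and whose
content-marginals are the E q. -/
theorem quasi_coupling_exists {ι C Q : Type} [Fintype ι] [DecidableEq ι]
    [DecidableEq C] [DecidableEq Q] (ctx : ι → C) (cnt : ι → Q)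
    (hinj : ∀ x y : ι, ctx x = ctx y → cnt x = cnt y → x = y)
    (D : (c : C) → ({x : ι // ctx x = c} → Bool) → ℝ)
    (E : (q : Q) → ({x : ι // cnt x = q} → Bool) → ℝ)
    (hD0 : ∀ c u, 0 ≤ D c u) (hD1 : ∀ c : C, (∑ u, D c u) = 1)
    (hE0 : ∀ q v, 0 ≤ E q v) (hE1 : ∀ q : Q, (∑ v, E q v) = 1)
    (hcons : ∀ a : ι,
      (∑ u ∈ Finset.univ.filter
          (fun u : {x : ι // ctx x = ctx a} → Bool => u ⟨a, rfl⟩ = true),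
        D (ctx a) u)
      = ∑ v ∈ Finset.univ.filter
          (fun v : {x : ι // cnt x = cnt a} → Bool => v ⟨a, rfl⟩ = true),
        E (cnt a) v) :
    ∃ Qm : (ι → Bool) → ℝ, (∑ f, Qm f) = 1 ∧
      (∀ (c : C) (u : {x : ι // ctx x = c} → Bool),
        (∑ f ∈ Finset.univ.filter
            (fun f : ι → Bool => ∀ x : {x : ι // ctx x = c}, f x.1 = u x),
          Qm f) = D c u) ∧
      (∀ (q : Q) (v : {x : ι // cnt x = q} → Bool),
        (∑ f ∈ Finset.univ.filter
            (fun f : ι → Bool => ∀ x : {x : ι // cnt x = q}, f x.1 = v x),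
          Qm f) = E q v) := by
  obtain ⟨ν, hνt, hνf⟩ : ∃ ν : ι → Bool → ℝ,
      (∀ a : ι, ν a true = ∑ u ∈ Finset.univ.filter
          (fun u : {x : ι // ctx x = ctx a} → Bool => u ⟨a, rfl⟩ = true), D (ctx a) u)
      ∧ (∀ a : ι, ν a false = 1 - ∑ u ∈ Finset.univ.filter
          (fun u : {x : ι // ctx x = ctx a} → Bool => u ⟨a, rfl⟩ = true), D (ctx a) u) :=
    ⟨fun a b => if b then (∑ u ∈ Finset.univ.filter
          (fun u : {x : ι // ctx x = ctx a} → Bool => u ⟨a, rfl⟩ = true), D (ctx a) u)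
        else 1 - ∑ u ∈ Finset.univ.filter
          (fun u : {x : ι // ctx x = ctx a} → Bool => u ⟨a, rfl⟩ = true), D (ctx a) u,
      fun a => rfl, fun a => rfl⟩
  have hν : ∀ a : ι, ν a true + ν a false = 1 := fun a => by rw [hνt, hνf]; ring
  have margD : ∀ (c : C) (a : ι) (h : ctx a = c) (b : Bool),
      (∑ u ∈ Finset.univ.filter
        (fun u : {x : ι // ctx x = c} → Bool => u ⟨a, h⟩ = b), D c u) = ν a b := by
    intro c a h b
    subst h
    cases b
    · have hsplit := Finset.sum_filter_add_sum_filter_not Finset.univ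
        (fun u : {x : ι // ctx x = ctx a} → Bool => u ⟨a, rfl⟩ = true) (D (ctx a))
      rw [hD1 (ctx a)] at hsplit
      have hff : (Finset.univ.filter
            (fun u : {x : ι // ctx x = ctx a} → Bool => ¬ u ⟨a, rfl⟩ = true))
          = Finset.univ.filter
            (fun u : {x : ι // ctx x = ctx a} → Bool => u ⟨a, rfl⟩ = false) := by
        ext w; simp [Bool.not_eq_true]
      rw [hff] at hsplit
      rw [hνf]
      linarith
    · rw [hνt]
  have margE : ∀ (q : Q) (a : ι) (h : cnt a = q) (b : Bool),
      (∑ w ∈ Finset.univ.filter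
        (fun w : {x : ι // cnt x = q} → Bool => w ⟨a, h⟩ = b), E q w) = ν a b := by
    intro q a h b
    subst h
    cases b
    · have hsplit := Finset.sum_filter_add_sum_filter_not Finset.univ
        (fun w : {x : ι // cnt x = cnt a} → Bool => w ⟨a, rfl⟩ = true) (E (cnt a))
      rw [hE1 (cnt a)] at hsplit
      have hff : (Finset.univ.filter
            (fun w : {x : ι // cnt x = cnt a} → Bool => ¬ w ⟨a, rfl⟩ = true))
          = Finset.univ.filter
            (fun w : {x : ι // cnt x = cnt a} → Bool => w ⟨a, rfl⟩ = false) := by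
        ext w; simp [Bool.not_eq_true]
      rw [hff] at hsplit
      rw [hνf, hcons a]
      linarith
    · rw [hνt, hcons a]
  refine ⟨fun f => (∏ a, ν a (f a))
    + (∑ c ∈ Finset.univ.image ctx,
        (D c (fun x => f x.1) - ∏ x : {x : ι // ctx x = c}, ν x.1 (f x.1))
          * ∏ x : {x : ι // ¬ ctx x = c}, ν x.1 (f x.1))
    + (∑ q ∈ Finset.univ.image cnt,
        (E q (fun x => f x.1) - ∏ x : {x : ι // cnt x = q}, ν x.1 (f x.1))
          * ∏ x : {x : ι // ¬ cnt x = q}, ν x.1 (f x.1)), ?_, ?_, ?_⟩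
  · -- total sum = 1
    haveI : IsEmpty {x : ι // False} := ⟨fun x => x.2⟩
    have hB : (∑ f : ι → Bool, ∑ c ∈ Finset.univ.image ctx,
        (D c (fun x => f x.1) - ∏ x : {x : ι // ctx x = c}, ν x.1 (f x.1))
          * ∏ x : {x : ι // ¬ ctx x = c}, ν x.1 (f x.1)) = 0 := by
      rw [Finset.sum_comm]
      refine Finset.sum_eq_zero (fun c' _ => ?_)
      have hk := qc_key ν hν (fun x => ctx x = c') (fun _ : ι => False)
        (fun u => D c' u - ∏ x : {x : ι // ctx x = c'}, ν x.1 (u x))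
        (fun x : {x : ι // False} => x.2.elim)
      refine Eq.trans (Finset.sum_congr ?_ (fun _ _ => rfl)) (hk.trans ?_)
      · ext f
        simp only [Finset.mem_filter, Finset.mem_univ, true_and, true_iff, iff_true]
        exact fun x => x.2.elim
      · refine mul_eq_zero_of_left ?_ _
        refine Eq.trans (Finset.sum_congr ?_ (fun _ _ => rfl))
          (qc_sub_zero (fun (x : {x : ι // ctx x = c'}) b => ν x.1 b)
            (fun x => hν x.1) (D c') (hD1 c'))
        ext u
        simp only [Finset.mem_filter, Finset.mem_univ, true_and, iff_true]
        exact fun x => x.2.2.elim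
    have hC : (∑ f : ι → Bool, ∑ q ∈ Finset.univ.image cnt,
        (E q (fun x => f x.1) - ∏ x : {x : ι // cnt x = q}, ν x.1 (f x.1))
          * ∏ x : {x : ι // ¬ cnt x = q}, ν x.1 (f x.1)) = 0 := by
      rw [Finset.sum_comm]
      refine Finset.sum_eq_zero (fun q' _ => ?_)
      have hk := qc_key ν hν (fun x => cnt x = q') (fun _ : ι => False)
        (fun u => E q' u - ∏ x : {x : ι // cnt x = q'}, ν x.1 (u x))
        (fun x : {x : ι // False} => x.2.elim)
      refine Eq.trans (Finset.sum_congr ?_ (fun _ _ => rfl)) (hk.trans ?_)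
      · ext f
        simp only [Finset.mem_filter, Finset.mem_univ, true_and, true_iff, iff_true]
        exact fun x => x.2.elim
      · refine mul_eq_zero_of_left ?_ _
        refine Eq.trans (Finset.sum_congr ?_ (fun _ _ => rfl))
          (qc_sub_zero (fun (x : {x : ι // cnt x = q'}) b => ν x.1 b)
            (fun x => hν x.1) (E q') (hE1 q'))
        ext u
        simp only [Finset.mem_filter, Finset.mem_univ, true_and, iff_true]
        exact fun x => x.2.2.elim
    simp only [Finset.sum_add_distrib]
    rw [qc_sum_prod_bool_one ν hν, hB, hC]
    norm_num
  · -- context marginals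
    intro c v
    have hA := qc_marg ν hν (fun x => ctx x = c) v
    have hB : (∑ f ∈ Finset.univ.filter
          (fun f : ι → Bool => ∀ x : {x : ι // ctx x = c}, f x.1 = v x),
        ∑ c' ∈ Finset.univ.image ctx,
          (D c' (fun x => f x.1) - ∏ x : {x : ι // ctx x = c'}, ν x.1 (f x.1))
            * ∏ x : {x : ι // ¬ ctx x = c'}, ν x.1 (f x.1))
        = if c ∈ Finset.univ.image ctx then
            D c v - ∏ x : {x : ι // ctx x = c}, ν x.1 (v x) else 0 := by
      rw [Finset.sum_comm]
      have hterm : ∀ c' ∈ Finset.univ.image ctx,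
          (∑ f ∈ Finset.univ.filter
              (fun f : ι → Bool => ∀ x : {x : ι // ctx x = c}, f x.1 = v x),
            (D c' (fun x => f x.1) - ∏ x : {x : ι // ctx x = c'}, ν x.1 (f x.1))
              * ∏ x : {x : ι // ¬ ctx x = c'}, ν x.1 (f x.1))
          = if c' = c then D c v - ∏ x : {x : ι // ctx x = c}, ν x.1 (v x) else 0 := by
        intro c' _
        have hk := qc_key ν hν (fun x => ctx x = c') (fun x => ctx x = c)
          (fun u => D c' u - ∏ x : {x : ι // ctx x = c'}, ν x.1 (u x)) v
        refine hk.trans ?_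
        by_cases hcc : c' = c
        · subst hcc
          rw [if_pos rfl]
          haveI : IsEmpty {y : ι // ctx y = c' ∧ ¬ ctx y = c'} := ⟨fun x => x.2.2 x.2.1⟩
          rw [Finset.univ_eq_empty (α := {y : ι // ctx y = c' ∧ ¬ ctx y = c'}),
            Finset.prod_empty, mul_one]
          refine Eq.trans (Finset.sum_congr ?_ (fun _ _ => rfl))
            (Finset.sum_singleton
              (fun u : {x : ι // ctx x = c'} → Bool =>
                D c' u - ∏ x : {x : ι // ctx x = c'}, ν x.1 (u x)) v)
          ext u
          simp only [Finset.mem_filter, Finset.mem_univ, true_and, Finset.mem_singleton]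
          constructor
          · intro h; funext x; exact h ⟨x.1, x.2, x.2⟩
          · rintro rfl x; rfl
        · rw [if_neg hcc]
          refine mul_eq_zero_of_left ?_ _
          haveI : IsEmpty {y : ι // ctx y = c' ∧ ctx y = c} :=
            ⟨fun x => hcc (x.2.1.symm.trans x.2.2)⟩
          refine Eq.trans (Finset.sum_congr ?_ (fun _ _ => rfl))
            (qc_sub_zero (fun (x : {x : ι // ctx x = c'}) b => ν x.1 b)
              (fun x => hν x.1) (D c') (hD1 c'))
          ext u
          simp only [Finset.mem_filter, Finset.mem_univ, true_and, iff_true]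
          exact fun x => isEmptyElim x
      refine Eq.trans (Finset.sum_congr rfl hterm) ?_
      exact Finset.sum_ite_eq' (Finset.univ.image ctx) c
        (fun _ => D c v - ∏ x : {x : ι // ctx x = c}, ν x.1 (v x))
    have hC : (∑ f ∈ Finset.univ.filter
          (fun f : ι → Bool => ∀ x : {x : ι // ctx x = c}, f x.1 = v x),
        ∑ q' ∈ Finset.univ.image cnt,
          (E q' (fun x => f x.1) - ∏ x : {x : ι // cnt x = q'}, ν x.1 (f x.1))
            * ∏ x : {x : ι // ¬ cnt x = q'}, ν x.1 (f x.1)) = 0 := by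
      rw [Finset.sum_comm]
      refine Finset.sum_eq_zero (fun q' _ => ?_)
      have hk := qc_key ν hν (fun x => cnt x = q') (fun x => ctx x = c)
        (fun u => E q' u - ∏ x : {x : ι // cnt x = q'}, ν x.1 (u x)) v
      refine hk.trans ?_
      refine mul_eq_zero_of_left ?_ _
      by_cases hex : ∃ a : ι, cnt a = q' ∧ ctx a = c
      · obtain ⟨a0, hq, hc0⟩ := hex
        refine Eq.trans (Finset.sum_congr ?_ (fun _ _ => rfl))
          (qc_sub_point (fun (x : {x : ι // cnt x = q'}) b => ν x.1 b)
            (fun x => hν x.1) (E q') ⟨a0, hq⟩ (v ⟨a0, hc0⟩)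
            (margE q' a0 hq (v ⟨a0, hc0⟩)))
        ext u
        simp only [Finset.mem_filter, Finset.mem_univ, true_and]
        constructor
        · intro h; exact h ⟨a0, hq, hc0⟩
        · intro h x
          have hx1 : x.1 = a0 := hinj x.1 a0 (x.2.2.trans hc0.symm) (x.2.1.trans hq.symm)
          have e1 : (⟨x.1, x.2.1⟩ : {x : ι // cnt x = q'}) = ⟨a0, hq⟩ := Subtype.ext hx1
          have e2 : (⟨x.1, x.2.2⟩ : {x : ι // ctx x = c}) = ⟨a0, hc0⟩ := Subtype.ext hx1
          rw [e1, e2]; exact h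
      · haveI : IsEmpty {y : ι // cnt y = q' ∧ ctx y = c} := ⟨fun x => hex ⟨x.1, x.2⟩⟩
        refine Eq.trans (Finset.sum_congr ?_ (fun _ _ => rfl))
          (qc_sub_zero (fun (x : {x : ι // cnt x = q'}) b => ν x.1 b)
            (fun x => hν x.1) (E q') (hE1 q'))
        ext u
        simp only [Finset.mem_filter, Finset.mem_univ, true_and, iff_true]
        exact fun x => isEmptyElim x
    simp only [Finset.sum_add_distrib]
    rw [hA, hB, hC]
    by_cases hc : c ∈ Finset.univ.image ctx
    · rw [if_pos hc]; ring
    · rw [if_neg hc]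
      haveI : IsEmpty {x : ι // ctx x = c} :=
        ⟨fun x => hc (Finset.mem_image.mpr ⟨x.1, Finset.mem_univ _, x.2⟩)⟩
      have hD : D c v = 1 := by
        have h1 := hD1 c
        have huniv : (Finset.univ : Finset ({x : ι // ctx x = c} → Bool)) = {v} := by
          ext u
          simp only [Finset.mem_univ, Finset.mem_singleton, true_iff]
          exact Subsingleton.elim u v
        rw [huniv, Finset.sum_singleton] at h1
        exact h1
      rw [Finset.univ_eq_empty (α := {x : ι // ctx x = c}), Finset.prod_empty, hD]
      norm_num
  · -- content marginals
    intro q v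
    have hA := qc_marg ν hν (fun x => cnt x = q) v
    have hB : (∑ f ∈ Finset.univ.filter
          (fun f : ι → Bool => ∀ x : {x : ι // cnt x = q}, f x.1 = v x),
        ∑ c' ∈ Finset.univ.image ctx,
          (D c' (fun x => f x.1) - ∏ x : {x : ι // ctx x = c'}, ν x.1 (f x.1))
            * ∏ x : {x : ι // ¬ ctx x = c'}, ν x.1 (f x.1)) = 0 := by
      rw [Finset.sum_comm]
      refine Finset.sum_eq_zero (fun c' _ => ?_)
      have hk := qc_key ν hν (fun x => ctx x = c') (fun x => cnt x = q)
        (fun u => D c' u - ∏ x : {x : ι // ctx x = c'}, ν x.1 (u x)) v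
      refine hk.trans ?_
      refine mul_eq_zero_of_left ?_ _
      by_cases hex : ∃ a : ι, ctx a = c' ∧ cnt a = q
      · obtain ⟨a0, hc0, hq⟩ := hex
        refine Eq.trans (Finset.sum_congr ?_ (fun _ _ => rfl))
          (qc_sub_point (fun (x : {x : ι // ctx x = c'}) b => ν x.1 b)
            (fun x => hν x.1) (D c') ⟨a0, hc0⟩ (v ⟨a0, hq⟩)
            (margD c' a0 hc0 (v ⟨a0, hq⟩)))
        ext u
        simp only [Finset.mem_filter, Finset.mem_univ, true_and]
        constructor
        · intro h; exact h ⟨a0, hc0, hq⟩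
        · intro h x
          have hx1 : x.1 = a0 := hinj x.1 a0 (x.2.1.trans hc0.symm) (x.2.2.trans hq.symm)
          have e1 : (⟨x.1, x.2.1⟩ : {x : ι // ctx x = c'}) = ⟨a0, hc0⟩ := Subtype.ext hx1
          have e2 : (⟨x.1, x.2.2⟩ : {x : ι // cnt x = q}) = ⟨a0, hq⟩ := Subtype.ext hx1
          rw [e1, e2]; exact h
      · haveI : IsEmpty {y : ι // ctx y = c' ∧ cnt y = q} := ⟨fun x => hex ⟨x.1, x.2⟩⟩
        refine Eq.trans (Finset.sum_congr ?_ (fun _ _ => rfl))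
          (qc_sub_zero (fun (x : {x : ι // ctx x = c'}) b => ν x.1 b)
            (fun x => hν x.1) (D c') (hD1 c'))
        ext u
        simp only [Finset.mem_filter, Finset.mem_univ, true_and, iff_true]
        exact fun x => isEmptyElim x
    have hC : (∑ f ∈ Finset.univ.filter
          (fun f : ι → Bool => ∀ x : {x : ι // cnt x = q}, f x.1 = v x),
        ∑ q' ∈ Finset.univ.image cnt,
          (E q' (fun x => f x.1) - ∏ x : {x : ι // cnt x = q'}, ν x.1 (f x.1))
            * ∏ x : {x : ι // ¬ cnt x = q'}, ν x.1 (f x.1))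
        = if q ∈ Finset.univ.image cnt then
            E q v - ∏ x : {x : ι // cnt x = q}, ν x.1 (v x) else 0 := by
      rw [Finset.sum_comm]
      have hterm : ∀ q' ∈ Finset.univ.image cnt,
          (∑ f ∈ Finset.univ.filter
              (fun f : ι → Bool => ∀ x : {x : ι // cnt x = q}, f x.1 = v x),
            (E q' (fun x => f x.1) - ∏ x : {x : ι // cnt x = q'}, ν x.1 (f x.1))
              * ∏ x : {x : ι // ¬ cnt x = q'}, ν x.1 (f x.1))
          = if q' = q then E q v - ∏ x : {x : ι // cnt x = q}, ν x.1 (v x) else 0 := by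
        intro q' _
        have hk := qc_key ν hν (fun x => cnt x = q') (fun x => cnt x = q)
          (fun u => E q' u - ∏ x : {x : ι // cnt x = q'}, ν x.1 (u x)) v
        refine hk.trans ?_
        by_cases hqq : q' = q
        · subst hqq
          rw [if_pos rfl]
          haveI : IsEmpty {y : ι // cnt y = q' ∧ ¬ cnt y = q'} := ⟨fun x => x.2.2 x.2.1⟩
          rw [Finset.univ_eq_empty (α := {y : ι // cnt y = q' ∧ ¬ cnt y = q'}),
            Finset.prod_empty, mul_one]
          refine Eq.trans (Finset.sum_congr ?_ (fun _ _ => rfl))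
            (Finset.sum_singleton
              (fun u : {x : ι // cnt x = q'} → Bool =>
                E q' u - ∏ x : {x : ι // cnt x = q'}, ν x.1 (u x)) v)
          ext u
          simp only [Finset.mem_filter, Finset.mem_univ, true_and, Finset.mem_singleton]
          constructor
          · intro h; funext x; exact h ⟨x.1, x.2, x.2⟩
          · rintro rfl x; rfl
        · rw [if_neg hqq]
          refine mul_eq_zero_of_left ?_ _
          haveI : IsEmpty {y : ι // cnt y = q' ∧ cnt y = q} :=
            ⟨fun x => hqq (x.2.1.symm.trans x.2.2)⟩
          refine Eq.trans (Finset.sum_congr ?_ (fun _ _ => rfl))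
            (qc_sub_zero (fun (x : {x : ι // cnt x = q'}) b => ν x.1 b)
              (fun x => hν x.1) (E q') (hE1 q'))
          ext u
          simp only [Finset.mem_filter, Finset.mem_univ, true_and, iff_true]
          exact fun x => isEmptyElim x
      refine Eq.trans (Finset.sum_congr rfl hterm) ?_
      exact Finset.sum_ite_eq' (Finset.univ.image cnt) q
        (fun _ => E q v - ∏ x : {x : ι // cnt x = q}, ν x.1 (v x))
    simp only [Finset.sum_add_distrib]
    rw [hA, hB, hC]
    by_cases hq : q ∈ Finset.univ.image cnt
    · rw [if_pos hq]; ring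
    · rw [if_neg hq]
      haveI : IsEmpty {x : ι // cnt x = q} :=
        ⟨fun x => hq (Finset.mem_image.mpr ⟨x.1, Finset.mem_univ _, x.2⟩)⟩
      have hE : E q v = 1 := by
        have h1 := hE1 q
        have huniv : (Finset.univ : Finset ({x : ι // cnt x = q} → Bool)) = {v} := by
          ext u
          simp only [Finset.mem_univ, Finset.mem_singleton, true_iff]
          exact Subsingleton.elim u v
        rw [huniv, Finset.sum_singleton] at h1
        exact h1
      rw [Finset.univ_eq_empty (α := {x : ι // cnt x = q}), Finset.prod_empty, hE]
      norm_num
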